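/- Let M = {x \in C^n : \sum x_i = 0} with the product x*y defined as the orthogonal projection to M of the coordinatewise product xy in C^n (n \ge 3). Then the automorphism group of the commutative nonassociative algebra (M,*) is isomorphic to Sym_n, acting by coordinate permutation. -/

import Mathlib

noncomputable section

/-- `M = {x ∈ ℂⁿ : ∑ xᵢ = 0}`, the orthogonal complement of the all-ones vector. -/
def zeroSum (n : ℕ) : Submodule ℂ (Fin n → ℂ) :=
  LinearMap.ker (∑ i : Fin n, (LinearMap.proj i : (Fin n → ℂ) →ₗ[ℂ] ℂ))

lemma mem_zeroSum {n : ℕ} (x : Fin n → ℂ) : x ∈ zeroSum n ↔ ∑ i, x i = 0 := by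
  simp [zeroSum, LinearMap.mem_ker, LinearMap.sum_apply]

/-- The product on `M`: the orthogonal projection to `M` of the coordinatewise product,
`x*y = xy - (⟨xy, 𝟏⟩/n) 𝟏`. -/
def mulM {n : ℕ} (x y : zeroSum n) : zeroSum n :=
  ⟨(x : Fin n → ℂ) * (y : Fin n → ℂ) -
      ((∑ i, (x : Fin n → ℂ) i * (y : Fin n → ℂ) i) / (n : ℂ)) • ((fun _ => 1) : Fin n → ℂ), by
    rw [mem_zeroSum]
    rcases Nat.eq_zero_or_pos n with h | h
    · subst h; simp
    · have hn : (n : ℂ) ≠ 0 := Nat.cast_ne_zero.2 h.ne'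
      simp only [Pi.sub_apply, Pi.mul_apply, Pi.smul_apply, smul_eq_mul, mul_one,
        Finset.sum_sub_distrib, Finset.sum_const, Finset.card_univ, Fintype.card_fin,
        nsmul_eq_mul]
      field_simp
      ring⟩

/-- The automorphism group of the commutative nonassociative algebra `(M, *)`: invertible
linear maps preserving the product. -/
def autM (n : ℕ) : Subgroup (Module.End ℂ (zeroSum n))ˣ where
  carrier := {u | ∀ x y, (u : Module.End ℂ (zeroSum n)) (mulM x y) =
    mulM ((u : Module.End ℂ (zeroSum n)) x) ((u : Module.End ℂ (zeroSum n)) y)}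
  one_mem' := fun _ _ => rfl
  mul_mem' := by
    intro a b ha hb x y
    simp only [Units.val_mul, Module.End.mul_apply]
    rw [hb x y, ha]
  inv_mem' := by
    intro u hu x y
    have h1 : ∀ z, (↑u : Module.End ℂ (zeroSum n)) ((↑u⁻¹ : Module.End ℂ (zeroSum n)) z) = z := by
      intro z
      rw [← Module.End.mul_apply, u.mul_inv]; rfl
    have h2 : ∀ z, (↑u⁻¹ : Module.End ℂ (zeroSum n)) ((↑u : Module.End ℂ (zeroSum n)) z) = z := by
      intro z
      rw [← Module.End.mul_apply, u.inv_mul]; rfl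
    have h3 := hu ((↑u⁻¹ : Module.End ℂ (zeroSum n)) x) ((↑u⁻¹ : Module.End ℂ (zeroSum n)) y)
    rw [h1, h1] at h3
    calc (↑u⁻¹ : Module.End ℂ (zeroSum n)) (mulM x y)
        = (↑u⁻¹ : Module.End ℂ (zeroSum n))
            ((↑u : Module.End ℂ (zeroSum n)) (mulM ((↑u⁻¹ : Module.End ℂ (zeroSum n)) x)
              ((↑u⁻¹ : Module.End ℂ (zeroSum n)) y))) := by rw [← h3]
      _ = _ := h2 _

namespace Stmt5

variable {n : ℕ}

lemma coe_mulM (x y : zeroSum n) (m : Fin n) :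
    ((mulM x y : zeroSum n) : Fin n → ℂ) m
      = (x : Fin n → ℂ) m * (y : Fin n → ℂ) m
        - (∑ i, (x : Fin n → ℂ) i * (y : Fin n → ℂ) i) / n := by
  simp [mulM]

/-- The idempotent at index `i`. -/
def w (n : ℕ) (i : Fin n) : zeroSum n :=
  ⟨fun j => if j = i then ((n:ℂ)-1)/((n:ℂ)-2) else -1/((n:ℂ)-2), by
    rw [mem_zeroSum]
    rcases eq_or_ne ((n:ℂ)-2) 0 with h | h
    · simp [h]
    · have key : ∀ j : Fin n, (if j = i then ((n:ℂ)-1)/((n:ℂ)-2) else -1/((n:ℂ)-2))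
          = -1/((n:ℂ)-2) + (if j = i then (n:ℂ)/((n:ℂ)-2) else 0) := by
        intro j
        split <;> (field_simp; try ring)
      simp only [key, Finset.sum_add_distrib, Finset.sum_const, Finset.card_univ,
        Fintype.card_fin, nsmul_eq_mul, Finset.sum_ite_eq', Finset.mem_univ, if_true]
      field_simp
      ring⟩

lemma w_apply (i j : Fin n) :
    ((w n i : zeroSum n) : Fin n → ℂ) j
      = if j = i then ((n:ℂ)-1)/((n:ℂ)-2) else -1/((n:ℂ)-2) := rfl

lemma cast_sub_two_ne (hn : 3 ≤ n) : ((n:ℂ) - 2) ≠ 0 := by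
  have h : (n:ℂ) ≠ 2 := by
    intro h
    have : (n:ℕ) = 2 := by exact_mod_cast h
    omega
  exact sub_ne_zero.mpr h

lemma cast_ne_zero' (hn : 3 ≤ n) : ((n:ℂ)) ≠ 0 := by
  have : (n:ℕ) ≠ 0 := by omega
  exact_mod_cast this

lemma cast_sub_one_ne (hn : 3 ≤ n) : ((n:ℂ) - 1) ≠ 0 := by
  have h : (n:ℂ) ≠ 1 := by
    intro h
    have : (n:ℕ) = 1 := by exact_mod_cast h
    omega
  exact sub_ne_zero.mpr h

lemma zs_sum (x : zeroSum n) : ∑ i, (x : Fin n → ℂ) i = 0 := (mem_zeroSum _).mp x.2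

lemma w_mul_sum (hn : 3 ≤ n) (i : Fin n) (f : Fin n → ℂ) :
    ∑ j, ((w n i : zeroSum n) : Fin n → ℂ) j * f j
      = (-1/((n:ℂ)-2)) * ∑ j, f j + ((n:ℂ)/((n:ℂ)-2)) * f i := by
  have hn2 := cast_sub_two_ne hn
  have key : ∀ j, ((w n i : zeroSum n) : Fin n → ℂ) j * f j
      = (-1/((n:ℂ)-2)) * f j + (if j = i then ((n:ℂ)/((n:ℂ)-2)) * f j else 0) := by
    intro j
    rw [w_apply]
    split
    · field_simp; ring
    · simp
  simp only [key, Finset.sum_add_distrib, Finset.sum_ite_eq', Finset.mem_univ, if_true,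
    ← Finset.mul_sum]

lemma mulM_w (hn : 3 ≤ n) (i : Fin n) (y : zeroSum n) (m : Fin n) :
    ((mulM (w n i) y : zeroSum n) : Fin n → ℂ) m
      = if m = i then (y : Fin n → ℂ) i
        else -((y : Fin n → ℂ) m + (y : Fin n → ℂ) i)/((n:ℂ)-2) := by
  have hn2 := cast_sub_two_ne hn
  have hn0 := cast_ne_zero' hn
  rw [coe_mulM, w_mul_sum hn, zs_sum, w_apply]
  split
  · rename_i h; subst h; field_simp; ring
  · field_simp; ring

lemma w_idem (hn : 3 ≤ n) (i : Fin n) : mulM (w n i) (w n i) = w n i := by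
  have hn2 := cast_sub_two_ne hn
  apply Subtype.ext; funext m
  rw [mulM_w hn, w_apply, w_apply]
  by_cases hm : m = i
  · simp [hm]
  · simp only [hm, if_false, eq_self_iff_true, ↓reduceIte]
    field_simp
    ring

lemma w_identity (hn : 3 ≤ n) (i : Fin n) (y : zeroSum n) :
    mulM (w n i) (mulM (w n i) y)
      = (1 - 1/((n:ℂ)-2)) • mulM (w n i) y + (1/((n:ℂ)-2)) • y := by
  have hn2 := cast_sub_two_ne hn
  apply Subtype.ext; funext m
  have hco : ((((1 - 1/((n:ℂ)-2)) • mulM (w n i) y + (1/((n:ℂ)-2)) • y : zeroSum n))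
      : Fin n → ℂ) m
      = (1 - 1/((n:ℂ)-2)) * ((mulM (w n i) y : zeroSum n) : Fin n → ℂ) m
        + (1/((n:ℂ)-2)) * (y : Fin n → ℂ) m := by
    simp
  rw [hco, mulM_w hn, mulM_w hn, mulM_w hn]
  by_cases hm : m = i
  · simp only [hm, if_pos rfl, eq_self_iff_true, ↓reduceIte]
    field_simp
    ring
  · simp only [hm, if_false, if_pos rfl, eq_self_iff_true, ↓reduceIte]
    field_simp
    ring

lemma w_ne_zero (hn : 3 ≤ n) (i : Fin n) : w n i ≠ 0 := by
  intro h
  have := congr_fun (congrArg Subtype.val h) i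
  rw [w_apply] at this
  simp only [if_pos rfl] at this
  exact (div_ne_zero (cast_sub_one_ne hn) (cast_sub_two_ne hn))
    (by simpa using this)

lemma w_inj (hn : 3 ≤ n) : Function.Injective (w n) := by
  intro i j h
  by_contra hij
  have h2 := congr_fun (congrArg Subtype.val h) i
  rw [w_apply, w_apply, if_pos rfl, if_neg] at h2
  · have hn2 := cast_sub_two_ne hn
    rw [div_eq_div_iff hn2 hn2] at h2
    have h3 : (n:ℂ) - 1 = -1 := mul_right_cancel₀ hn2 h2
    exact cast_ne_zero' hn (by linear_combination h3)
  · exact hij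

lemma repr_w (hn : 3 ≤ n) (x : zeroSum n) :
    x = ∑ i, ((((n:ℂ)-2)/(n:ℂ)) * (x : Fin n → ℂ) i) • w n i := by
  have hn2 := cast_sub_two_ne hn
  have hn0 := cast_ne_zero' hn
  apply Subtype.ext; funext m
  have hco : ((((∑ i, ((((n:ℂ)-2)/(n:ℂ)) * (x : Fin n → ℂ) i) • w n i : zeroSum n)))
      : Fin n → ℂ) m
      = ∑ i, (((n:ℂ)-2)/(n:ℂ)) * (x : Fin n → ℂ) i
          * ((w n i : zeroSum n) : Fin n → ℂ) m := by
    rw [AddSubmonoidClass.coe_finset_sum, Finset.sum_apply]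
    simp [mul_assoc]
  rw [hco]
  have key : ∀ i, (((n:ℂ)-2)/(n:ℂ)) * (x : Fin n → ℂ) i
        * ((w n i : zeroSum n) : Fin n → ℂ) m
      = (-1/(n:ℂ)) * (x : Fin n → ℂ) i
        + (if i = m then (x : Fin n → ℂ) i else 0) := by
    intro i
    rw [w_apply]
    by_cases him : i = m
    · rw [if_pos him, if_pos him.symm]
      field_simp
      ring
    · rw [if_neg him, if_neg (fun hmi => him hmi.symm)]
      field_simp
      ring
  simp only [key, Finset.sum_add_distrib, Finset.sum_ite_eq', Finset.mem_univ, if_true,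
    ← Finset.mul_sum, zs_sum, mul_zero, zero_add]

lemma end_ext_w (hn : 3 ≤ n) (f g : Module.End ℂ (zeroSum n))
    (h : ∀ i, f (w n i) = g (w n i)) : f = g := by
  apply LinearMap.ext
  intro x
  rw [repr_w hn x, map_sum, map_sum]
  simp only [map_smul, h]

/-- The coordinate-permutation endomorphism of `M`. -/
def permL (σ : Equiv.Perm (Fin n)) : Module.End ℂ (zeroSum n) :=
  (LinearMap.funLeft ℂ ℂ ⇑σ⁻¹).restrict (p := zeroSum n) (q := zeroSum n) (fun x hx => by
    rw [mem_zeroSum] at hx ⊢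
    simp only [LinearMap.funLeft_apply]
    exact (Equiv.sum_comp (σ⁻¹ : Equiv.Perm (Fin n)) x).trans hx)

lemma permL_apply (σ : Equiv.Perm (Fin n)) (x : zeroSum n) (m : Fin n) :
    ((permL σ x : zeroSum n) : Fin n → ℂ) m = (x : Fin n → ℂ) (σ⁻¹ m) := rfl

lemma permL_one : permL (1 : Equiv.Perm (Fin n)) = 1 := by
  apply LinearMap.ext; intro x; apply Subtype.ext; funext m
  rw [permL_apply]
  rfl

lemma permL_mul (σ τ : Equiv.Perm (Fin n)) : permL (σ * τ) = permL σ * permL τ := by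
  apply LinearMap.ext; intro x; apply Subtype.ext; funext m
  rw [Module.End.mul_apply, permL_apply, permL_apply, permL_apply, mul_inv_rev,
    Equiv.Perm.mul_apply]

/-- The coordinate-permutation unit. -/
def permU (σ : Equiv.Perm (Fin n)) : (Module.End ℂ (zeroSum n))ˣ where
  val := permL σ
  inv := permL σ⁻¹
  val_inv := by rw [← permL_mul, mul_inv_cancel, permL_one]
  inv_val := by rw [← permL_mul, inv_mul_cancel, permL_one]

lemma permU_mem (σ : Equiv.Perm (Fin n)) : permU σ ∈ autM n := by
  intro x y
  apply Subtype.ext; funext m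
  show ((permL σ (mulM x y) : zeroSum n) : Fin n → ℂ) m
    = ((mulM (permL σ x) (permL σ y) : zeroSum n) : Fin n → ℂ) m
  rw [permL_apply, coe_mulM, coe_mulM]
  simp only [permL_apply]
  congr 2
  exact (Equiv.sum_comp (σ⁻¹ : Equiv.Perm (Fin n))
    (fun i => (x : Fin n → ℂ) i * (y : Fin n → ℂ) i)).symm

/-- The monoid hom from `Sym n` to the automorphism group. -/
def phi0 (n : ℕ) : Equiv.Perm (Fin n) →* autM n where
  toFun σ := ⟨permU σ, permU_mem σ⟩
  map_one' := Subtype.ext (Units.ext permL_one)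
  map_mul' σ τ := Subtype.ext (Units.ext (permL_mul σ τ))

lemma permL_w (hn : 3 ≤ n) (σ : Equiv.Perm (Fin n)) (i : Fin n) :
    permL σ (w n i) = w n (σ i) := by
  apply Subtype.ext; funext m
  rw [permL_apply, w_apply, w_apply]
  by_cases hm : m = σ i
  · rw [if_pos hm, if_pos (by rw [hm]; exact Equiv.symm_apply_apply σ i)]
  · rw [if_neg hm, if_neg (fun h => hm (by rw [← h]; exact (Equiv.apply_symm_apply σ m).symm))]

/-- `δ_j - δ_k`. -/
def pairVec (j k : Fin n) : zeroSum n :=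
  ⟨fun m => (if m = j then 1 else 0) + (if m = k then (-1:ℂ) else 0), by
    rw [mem_zeroSum]
    simp [Finset.sum_add_distrib]⟩

lemma pairVec_sum (j k : Fin n) (f : Fin n → ℂ) :
    ∑ i, f i * ((pairVec j k : zeroSum n) : Fin n → ℂ) i = f j - f k := by
  show ∑ i, f i * ((if i = j then 1 else 0) + (if i = k then (-1:ℂ) else 0)) = f j - f k
  simp [mul_add, mul_ite, Finset.sum_add_distrib, sub_eq_add_neg]

lemma pairVec_apply_left (j k : Fin n) (hjk : j ≠ k) :
    ((pairVec j k : zeroSum n) : Fin n → ℂ) j = 1 := by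
  show (if j = j then (1:ℂ) else 0) + (if j = k then (-1:ℂ) else 0) = 1
  rw [if_pos rfl, if_neg hjk, add_zero]

lemma exists_third (hn : 3 ≤ n) (i j : Fin n) : ∃ p : Fin n, p ≠ i ∧ p ≠ j := by
  by_contra h
  push_neg at h
  have hsub : (Finset.univ : Finset (Fin n)) ⊆ {i, j} := by
    intro p _
    rcases eq_or_ne p i with hp | hp
    · simp [hp]
    · simp [h p hp]
  have h1 := Finset.card_le_card hsub
  have h2 : ({i, j} : Finset (Fin n)).card ≤ 2 :=
    le_trans (Finset.card_insert_le _ _) (by simp)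
  simp only [Finset.card_univ, Fintype.card_fin] at h1
  omega

/-- Classification of the distinguished idempotents. -/
lemma good_eq_w (hn : 3 ≤ n) (e : zeroSum n) (hne : e ≠ 0)
    (hid : mulM e e = e)
    (hop : ∀ y, mulM e (mulM e y)
      = (1 - 1/((n:ℂ)-2)) • mulM e y + (1/((n:ℂ)-2)) • y) :
    ∃ i, e = w n i := by
  have hn2 := cast_sub_two_ne hn
  have hn0 := cast_ne_zero' hn
  set a : ℂ := 1/((n:ℂ)-2) with ha
  have hane : a ≠ 0 := one_div_ne_zero hn2
  set E : Fin n → ℂ := (e : Fin n → ℂ) with hE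
  have hsum : ∑ i, E i = 0 := zs_sum e
  -- each coordinate satisfies the same quadratic
  have hquad : ∀ j, E j * E j = E j + (∑ i, E i * E i) / n := by
    intro j
    have := congr_fun (congrArg Subtype.val hid) j
    rw [coe_mulM] at this
    linear_combination this
  have sum1 : ∀ j k, E j ≠ E k → E j + E k = 1 := by
    intro j k hne'
    have h1 := hquad j
    have h2 := hquad k
    have h3 : (E j - E k) * (E j + E k - 1) = 0 := by linear_combination h1 - h2
    rcases mul_eq_zero.mp h3 with h | h
    · exact absurd (sub_eq_zero.mp h) hne'
    · linear_combination h
  -- a value occurring at two coordinates is 1 or -a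
  have rep : ∀ j k, j ≠ k → E j = E k → (E j = 1 ∨ E j = -a) := by
    intro j k hjk heq
    set y := pairVec j k with hy
    have hsy : ∑ i, E i * ((y : zeroSum n) : Fin n → ℂ) i = 0 := by
      rw [pairVec_sum]; rw [heq]; ring
    have hz : ∀ m, ((mulM e y : zeroSum n) : Fin n → ℂ) m
        = E m * ((y : zeroSum n) : Fin n → ℂ) m := by
      intro m
      rw [coe_mulM, hsy]
      simp
      exact Or.inl rfl
    have hsz : ∑ i, E i * ((mulM e y : zeroSum n) : Fin n → ℂ) i = 0 := by
      simp only [hz, ← mul_assoc]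
      rw [pairVec_sum (f := fun i => E i * E i)]
      rw [heq]; ring
    have hyj : ((y : zeroSum n) : Fin n → ℂ) j = 1 := pairVec_apply_left j k hjk
    have hL : ((mulM e (mulM e y) : zeroSum n) : Fin n → ℂ) j = E j * E j := by
      rw [coe_mulM, hsz, hz, hyj]
      simp
      exact Or.inl rfl
    have hR : (((1 - a) • mulM e y + a • y : zeroSum n) : Fin n → ℂ) j
        = (1 - a) * E j + a := by
      simp only [Submodule.coe_add, SetLike.val_smul, Pi.add_apply, Pi.smul_apply,
        smul_eq_mul, hz, hyj]
      ring
    have H : E j * E j = (1 - a) * E j + a := by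
      rw [← hL, ← hR, hop y]
    have h3 : (E j - 1) * (E j + a) = 0 := by linear_combination H
    rcases mul_eq_zero.mp h3 with h | h
    · left; linear_combination h
    · right; linear_combination h
  -- a repeated value is in fact -a
  have rep' : ∀ j k, j ≠ k → E j = E k → E j = -a := by
    intro j k hjk heq
    rcases rep j k hjk heq with h1 | h2
    · exfalso
      have hvals : ∀ l, E l = 1 ∨ E l = 0 := by
        intro l
        rcases eq_or_ne (E l) 1 with h | h
        · exact Or.inl h
        · right
          have := sum1 l j (by rw [h1]; exact h)
          linear_combination this - h1
      have hterm : ∀ l, E l = (if E l = 1 then (1:ℂ) else 0) := by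
        intro l
        rcases hvals l with h | h <;> simp [h]
      have hcard : (0:ℂ) = ((Finset.univ.filter (fun l => E l = 1)).card : ℂ) := by
        rw [← hsum, Finset.sum_congr rfl (fun l _ => hterm l), Finset.sum_boole]
      have hmem : j ∈ Finset.univ.filter (fun l => E l = 1) := by
        simp [h1]
      exact Finset.card_ne_zero_of_mem hmem
        (by exact_mod_cast hcard.symm)
    · exact h2
  -- conclude
  by_cases hex : ∃ i, E i ≠ -a
  · obtain ⟨i, hi⟩ := hex
    have claim : ∀ j, j ≠ i → E j = -a := by
      intro j hj
      by_contra hja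
      have hne' : E j ≠ E i := fun h => hja (rep' j i hj h)
      obtain ⟨p, hpi, hpj⟩ := exists_third hn i j
      have h1 : E p ≠ E j := by
        intro h
        have := rep' p j hpj h
        rw [h] at this
        exact hja this
      have h2 : E p ≠ E i := by
        intro h
        have := rep' p i hpi h
        rw [h] at this
        exact hi this
      have s1 := sum1 p j h1
      have s2 := sum1 p i h2
      exact hne' (by linear_combination s1 - s2)
    refine ⟨i, Subtype.ext (funext fun m => ?_)⟩
    rw [w_apply, (hE.symm : (e : Fin n → ℂ) = E)]
    by_cases hm : m = i
    · rw [if_pos hm, hm]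
      -- compute E i from the sum
      have hterm : ∀ m, E m = -a + (if m = i then (E i + a) else 0) := by
        intro m
        by_cases hmi : m = i
        · rw [if_pos hmi, hmi]; ring
        · rw [if_neg hmi, claim m hmi]; ring
      have hs : (0:ℂ) = (n:ℂ) * (-a) + (E i + a) := by
        rw [← hsum, Finset.sum_congr rfl (fun l _ => hterm l),
          Finset.sum_add_distrib, Finset.sum_const, Finset.card_univ, Fintype.card_fin,
          Finset.sum_ite_eq', if_pos (Finset.mem_univ i), nsmul_eq_mul]
      have : E i = ((n:ℂ)-1) * a := by linear_combination -hs
      rw [this, ha]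
      field_simp
    · rw [if_neg hm, claim m hm, ha]
      ring
  · push_neg at hex
    exfalso
    have hs : (0:ℂ) = (n:ℂ) * (-a) := by
      rw [← hsum, Finset.sum_congr rfl (fun l _ => hex l), Finset.sum_const,
        Finset.card_univ, Fintype.card_fin, nsmul_eq_mul]
    exact hane (by
      rcases mul_eq_zero.mp hs.symm with h | h
      · exact absurd h hn0
      · linear_combination -h)

lemma aut_w (hn : 3 ≤ n) (u : autM n) (i : Fin n) :
    ∃ j, ((u : (Module.End ℂ (zeroSum n))ˣ) : Module.End ℂ (zeroSum n)) (w n i) = w n j := by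
  set U : Module.End ℂ (zeroSum n) := ((u : (Module.End ℂ (zeroSum n))ˣ) :
    Module.End ℂ (zeroSum n)) with hU
  set V : Module.End ℂ (zeroSum n) := (((u : (Module.End ℂ (zeroSum n))ˣ)⁻¹ :
    (Module.End ℂ (zeroSum n))ˣ) : Module.End ℂ (zeroSum n)) with hV
  have hmul : ∀ x y, U (mulM x y) = mulM (U x) (U y) := u.2
  have hUV : ∀ z, U (V z) = z := by
    intro z
    rw [← Module.End.mul_apply, hU, hV, Units.mul_inv]
    rfl
  have hVU : ∀ z, V (U z) = z := by
    intro z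
    rw [← Module.End.mul_apply, hU, hV, Units.inv_mul]
    rfl
  apply good_eq_w hn (U (w n i))
  · intro h
    apply w_ne_zero hn i
    have := congrArg V h
    rw [hVU, map_zero] at this
    exact this
  · rw [← hmul, w_idem hn]
  · intro y
    calc mulM (U (w n i)) (mulM (U (w n i)) y)
        = mulM (U (w n i)) (mulM (U (w n i)) (U (V y))) := by rw [hUV]
      _ = U (mulM (w n i) (mulM (w n i) (V y))) := by rw [hmul, hmul]
      _ = U ((1 - 1/((n:ℂ)-2)) • mulM (w n i) (V y) + (1/((n:ℂ)-2)) • (V y)) := by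
          rw [w_identity hn]
      _ = (1 - 1/((n:ℂ)-2)) • U (mulM (w n i) (V y)) + (1/((n:ℂ)-2)) • U (V y) := by
          rw [map_add, map_smul, map_smul]
      _ = (1 - 1/((n:ℂ)-2)) • mulM (U (w n i)) y + (1/((n:ℂ)-2)) • y := by
          simp only [hmul, hUV]

lemma phi0_surj (hn : 3 ≤ n) : Function.Surjective (phi0 n) := by
  intro u
  set U : Module.End ℂ (zeroSum n) := ((u : (Module.End ℂ (zeroSum n))ˣ) :
    Module.End ℂ (zeroSum n)) with hU
  set V : Module.End ℂ (zeroSum n) := (((u : (Module.End ℂ (zeroSum n))ˣ)⁻¹ :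
    (Module.End ℂ (zeroSum n))ˣ) : Module.End ℂ (zeroSum n)) with hV
  have hVU : ∀ z, V (U z) = z := by
    intro z
    rw [← Module.End.mul_apply, hU, hV, Units.inv_mul]
    rfl
  choose f hf using aut_w hn u
  have finj : Function.Injective f := by
    intro i j h
    apply w_inj hn
    have h2 : U (w n i) = U (w n j) := by rw [hf, hf, h]
    calc w n i = V (U (w n i)) := (hVU _).symm
      _ = V (U (w n j)) := by rw [h2]
      _ = w n j := hVU _
  let σ : Equiv.Perm (Fin n) := Equiv.ofBijective f (Finite.injective_iff_bijective.mp finj)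
  refine ⟨σ, ?_⟩
  apply Subtype.ext
  apply Units.ext
  apply end_ext_w hn
  intro i
  show permL σ (w n i) = U (w n i)
  rw [permL_w hn]
  show w n (f i) = U (w n i)
  exact (hf i).symm

lemma phi0_inj (hn : 3 ≤ n) : Function.Injective (phi0 n) := by
  intro σ τ h
  have hL : permL (n := n) σ = permL τ :=
    congrArg (fun v : autM n => ((v : (Module.End ℂ (zeroSum n))ˣ) :
      Module.End ℂ (zeroSum n))) h
  apply Equiv.ext
  intro i
  apply w_inj hn
  have := congrArg (fun g : Module.End ℂ (zeroSum n) => g (w n i)) hL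
  simpa only [permL_w hn] using this

end Stmt5

/-- the automorphism group of `(M, *)` is isomorphic to `Sym_n`, acting by
coordinate permutation. -/
theorem stmt5 (n : ℕ) (hn : 3 ≤ n) :
    ∃ φ : Equiv.Perm (Fin n) ≃* autM n,
      ∀ (σ : Equiv.Perm (Fin n)) (x : zeroSum n) (i : Fin n),
        ((((φ σ : (Module.End ℂ (zeroSum n))ˣ) : Module.End ℂ (zeroSum n)) x : Fin n → ℂ)) i =
          (x : Fin n → ℂ) (σ⁻¹ i) := by
  refine ⟨MulEquiv.ofBijective (Stmt5.phi0 n) ⟨Stmt5.phi0_inj hn, Stmt5.phi0_surj hn⟩, ?_⟩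
  intro σ x i
  rfl
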